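/- Let φ : ℝ → ℝ be differentiable with differentiable derivative, and assume φ(x) → 0 and φ'(x) → 0 as x → +∞ and as x → −∞. Define n : ℝ → ℝ by n(x) = exp(φ(x)) − 1 − φ''(x) (so that −φ'' = 1 + n − e^φ), and assume the function x ↦ n(x)·φ'(x) is Lebesgue integrable on ℝ. Then ∫ℝ n(x)·φ'(x) dx = 0. -/

import Mathlib

open Filter MeasureTheory

/-- If `φ` is twice differentiable, `φ` and `φ'` vanish at `±∞`, and
`n = e^φ − 1 − φ''` (so that `−φ'' = 1 + n − e^φ`), then `∫ n·φ' = 0`. -/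
theorem euler_poisson_n_phi_prime_integral_zero
    (φ n : ℝ → ℝ)
    (hφ : Differentiable ℝ φ) (hφ' : Differentiable ℝ (deriv φ))
    (htop : Tendsto φ atTop (nhds 0)) (hbot : Tendsto φ atBot (nhds 0))
    (htop' : Tendsto (deriv φ) atTop (nhds 0)) (hbot' : Tendsto (deriv φ) atBot (nhds 0))
    (hn : ∀ x : ℝ, n x = Real.exp (φ x) - 1 - deriv (deriv φ) x)
    (hint : Integrable (fun x => n x * deriv φ x)) :
    ∫ x : ℝ, n x * deriv φ x = 0 := by
  set F : ℝ → ℝ := fun x => Real.exp (φ x) - φ x - (deriv φ x) ^ 2 / 2 with hF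
  have hderiv : ∀ x, HasDerivAt F (n x * deriv φ x) x := by
    intro x
    have h1 : HasDerivAt φ (deriv φ x) x := (hφ x).hasDerivAt
    have h2 : HasDerivAt (deriv φ) (deriv (deriv φ) x) x := (hφ' x).hasDerivAt
    have := ((h1.exp.sub h1).sub (((h2.pow 2)).div_const 2))
    refine this.congr_deriv ?_
    rw [hn x]; ring
  have hFtop : Tendsto F atTop (nhds 1) := by
    have : Tendsto F atTop (nhds (Real.exp 0 - 0 - 0 ^ 2 / 2)) :=
      ((htop.rexp.sub htop).sub ((htop'.pow 2).div_const 2))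
    simpa using this
  have hFbot : Tendsto F atBot (nhds 1) := by
    have : Tendsto F atBot (nhds (Real.exp 0 - 0 - 0 ^ 2 / 2)) :=
      ((hbot.rexp.sub hbot).sub ((hbot'.pow 2).div_const 2))
    simpa using this
  rw [integral_of_hasDerivAt_of_tendsto hderiv hint hFbot hFtop]
  ring
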